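/- If 2^ω = ω₁, then there exists a maximal almost disjoint family on ω₁ (consisting of subsets of ω₁ of size ω₁, pairwise intersecting in countable sets) of cardinality 2^{ω₁}. -/

import Mathlib

open Set Cardinal

namespace MadAux

noncomputable section

abbrev I : Set Ordinal.{0} := Set.Iio (Cardinal.aleph.{0} 1).ord

lemma mk_I : #I = Cardinal.lift.{1} (Cardinal.aleph.{0} 1) := by
  rw [Ordinal.mk_Iio_ordinal, Cardinal.card_ord]

abbrev T : Type 1 := (α : ↥I) × (↥(Set.Iio α.1) → Bool)

def res (f : ↥I → Bool) (α : ↥I) : T :=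
  ⟨α, fun β => f ⟨β.1, Set.mem_Iio.mpr (lt_trans (Set.mem_Iio.mp β.2) (Set.mem_Iio.mp α.2))⟩⟩

lemma res_fst (f : ↥I → Bool) (α : ↥I) : (res f α).1 = α := rfl

lemma mk_T (h : (2 : Cardinal) ^ Cardinal.aleph0.{0} = Cardinal.aleph.{0} 1) :
    #T ≤ Cardinal.lift.{1} (Cardinal.aleph.{0} 1) := by
  have key : ∀ α : ↥I, #(↥(Set.Iio α.1) → Bool) ≤ Cardinal.lift.{1} (Cardinal.aleph.{0} 1) := by
    intro α
    have e1 : #(↥(Set.Iio α.1) → Bool) = 2 ^ #(↥(Set.Iio α.1)) := by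
      rw [← mk_set]
      exact mk_congr ((Equiv.refl _).arrowCongr Equiv.propEquivBool).symm
    have e2 : #(↥(Set.Iio α.1)) = Cardinal.lift.{1} α.1.card := Ordinal.mk_Iio_ordinal α.1
    have hcard : α.1.card ≤ ℵ₀ := by
      have := (Cardinal.lt_ord.mp α.2)
      rwa [← Cardinal.succ_aleph0, Order.lt_succ_iff] at this
    calc #(↥(Set.Iio α.1) → Bool) = 2 ^ Cardinal.lift.{1} α.1.card := by rw [e1, e2]
      _ ≤ 2 ^ Cardinal.lift.{1} Cardinal.aleph0.{0} := by
          exact power_le_power_left (by norm_num) (Cardinal.lift_le.mpr hcard)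
      _ = Cardinal.lift.{1} (2 ^ ℵ₀) := (Cardinal.lift_two_power _).symm
      _ = Cardinal.lift.{1} (Cardinal.aleph.{0} 1) := by rw [h]
  calc #T = Cardinal.sum (fun α : ↥I => #(↥(Set.Iio α.1) → Bool)) := mk_sigma _
    _ ≤ Cardinal.sum (fun _ : ↥I => Cardinal.lift.{1} (Cardinal.aleph.{0} 1)) := Cardinal.sum_le_sum _ _ key
    _ = #(↥I) * Cardinal.lift.{1} (Cardinal.aleph.{0} 1) := Cardinal.sum_const' _ _
    _ = Cardinal.lift.{1} (Cardinal.aleph.{0} 1) * Cardinal.lift.{1} (Cardinal.aleph.{0} 1) := by rw [mk_I]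
    _ = Cardinal.lift.{1} (Cardinal.aleph.{0} 1) := Cardinal.mul_eq_self (by
        simpa using (aleph0_le_aleph 1))

variable (e : T ↪ ↥I)

def Bf (f : ↥I → Bool) : Set Ordinal.{0} :=
  Set.range fun α : ↥I => ((e (res f α)) : Ordinal)

lemma Bf_subset (f : ↥I → Bool) : Bf e f ⊆ I := by
  rintro x ⟨α, rfl⟩
  exact (e (res f α)).2

lemma Bf_inj_aux (f : ↥I → Bool) :
    Function.Injective fun α : ↥I => ((e (res f α)) : Ordinal) := by
  intro α α' hx
  have h1 : e (res f α) = e (res f α') := Subtype.ext hx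
  have h2 : res f α = res f α' := e.injective h1
  exact congrArg Sigma.fst h2

lemma mk_Bf (f : ↥I → Bool) : #(Bf e f) = Cardinal.lift.{1} (Cardinal.aleph.{0} 1) := by
  rw [Bf, mk_range_eq _ (Bf_inj_aux e f), mk_I]

lemma Bf_ad {f g : ↥I → Bool} (hfg : f ≠ g) :
    #(↥(Bf e f ∩ Bf e g)) ≤ Cardinal.lift.{1} Cardinal.aleph0.{0} := by
  obtain ⟨β, hβ⟩ := Function.ne_iff.mp hfg
  have hsub : Bf e f ∩ Bf e g ⊆
      (fun α : ↥I => ((e (res f α)) : Ordinal)) '' {α : ↥I | α.1 ≤ β.1} := by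
    rintro x ⟨⟨α, rfl⟩, ⟨α', hx⟩⟩
    have h1 : e (res g α') = e (res f α) := Subtype.ext hx
    have h2 : res g α' = res f α := e.injective h1
    have hfst : α' = α := congrArg Sigma.fst h2
    subst hfst
    have h3 : ((res g α').2 : ↥(Set.Iio α'.1) → Bool) = (res f α').2 :=
      eq_of_heq (Sigma.mk.inj_iff.mp h2).2
    have hle : α'.1 ≤ β.1 := by
      by_contra hlt
      push_neg at hlt
      have h4 := congrFun h3 ⟨β.1, Set.mem_Iio.mpr hlt⟩
      simp only [res] at h4
      exact hβ h4.symm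
    exact ⟨α', hle, rfl⟩
  have h4 : #(↥(Bf e f ∩ Bf e g)) ≤ #({α : ↥I | α.1 ≤ β.1}) :=
    (mk_le_mk_of_subset hsub).trans (mk_image_le)
  have hsucc : Order.succ β.1 < (Cardinal.aleph.{0} 1).ord :=
    (Cardinal.isSuccLimit_ord (aleph0_le_aleph 1)).succ_lt β.2
  have h5 : #({α : ↥I | α.1 ≤ β.1}) ≤ #(↥(Set.Iio (Order.succ β.1))) := by
    apply mk_le_of_injective (f := fun α : {α : ↥I | α.1 ≤ β.1} =>
      (⟨α.1.1, lt_of_le_of_lt α.2 (Order.lt_succ β.1)⟩ : ↥(Set.Iio (Order.succ β.1))))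
    intro a b hab
    simp only [Subtype.mk.injEq] at hab
    exact Subtype.ext (Subtype.ext (Subtype.mk.inj hab))
  have h6 : #(↥(Set.Iio (Order.succ β.1))) ≤ Cardinal.lift.{1} Cardinal.aleph0.{0} := by
    rw [Ordinal.mk_Iio_ordinal]
    apply Cardinal.lift_le.mpr
    have := Cardinal.lt_ord.mp hsucc
    rwa [← Cardinal.succ_aleph0, Order.lt_succ_iff] at this
  exact h4.trans (h5.trans h6)

lemma Bf_injective : Function.Injective (Bf e) := by
  intro f g hfg
  by_contra hne
  have h1 := Bf_ad e hne
  rw [hfg, Set.inter_self, mk_Bf] at h1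
  exact absurd (Cardinal.lift_le.mp h1) (not_le.mpr aleph0_lt_aleph_one)

end

end MadAux

open MadAux in
theorem stmt2 (h : (2 : Cardinal) ^ Cardinal.aleph0.{0} = Cardinal.aleph.{0} 1) :
    ∃ 𝒜 : Set (Set Ordinal.{0}),
      (∀ A ∈ 𝒜, A ⊆ Set.Iio (Cardinal.aleph.{0} 1).ord ∧
        #A = Cardinal.lift.{1} (Cardinal.aleph.{0} 1)) ∧
      (∀ A ∈ 𝒜, ∀ B ∈ 𝒜, A ≠ B → #(↥(A ∩ B)) ≤ Cardinal.lift.{1} Cardinal.aleph0.{0}) ∧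
      (∀ N ⊆ Set.Iio (Cardinal.aleph.{0} 1).ord, #N = Cardinal.lift.{1} (Cardinal.aleph.{0} 1) →
        ∃ A ∈ 𝒜, #(↥(N ∩ A)) = Cardinal.lift.{1} (Cardinal.aleph.{0} 1)) ∧
      #𝒜 = Cardinal.lift.{1} ((2 : Cardinal) ^ Cardinal.aleph.{0} 1) := by
  obtain ⟨e⟩ : Nonempty (T ↪ ↥I) := by
    rw [← Cardinal.le_def, mk_I]
    exact mk_T h
  set S : Set (Set (Set Ordinal.{0})) := {𝒜 |
    (∀ A ∈ 𝒜, A ⊆ I ∧ #A = Cardinal.lift.{1} (Cardinal.aleph.{0} 1)) ∧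
    (∀ A ∈ 𝒜, ∀ B ∈ 𝒜, A ≠ B → #(↥(A ∩ B)) ≤ Cardinal.lift.{1} Cardinal.aleph0.{0})} with hS
  have h𝒜₀ : Set.range (Bf e) ∈ S := by
    constructor
    · rintro A ⟨f, rfl⟩
      exact ⟨Bf_subset e f, mk_Bf e f⟩
    · rintro A ⟨f, rfl⟩ B ⟨g, rfl⟩ hAB
      exact Bf_ad e (fun hfg => hAB (by rw [hfg]))
  obtain ⟨m, hm0, hmS, hmax⟩ := zorn_subset_nonempty S (fun c hcS hchain _ => by
    refine ⟨⋃₀ c, ⟨?_, ?_⟩, fun s hs => subset_sUnion_of_mem hs⟩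
    · rintro A ⟨s, hs, hA⟩
      exact (hcS hs).1 A hA
    · rintro A ⟨s, hs, hA⟩ B ⟨t, ht, hB⟩ hAB
      rcases hchain.total hs ht with hst | hts
      · exact (hcS ht).2 A (hst hA) B hB hAB
      · exact (hcS hs).2 A hA B (hts hB) hAB) _ h𝒜₀
  refine ⟨m, hmS.1, hmS.2, ?_, ?_⟩
  · -- maximality
    intro N hNI hNcard
    by_contra hno
    push_neg at hno
    have hsmall : ∀ A ∈ m, #(↥(N ∩ A)) ≤ Cardinal.lift.{1} Cardinal.aleph0.{0} := by
      intro A hA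
      by_contra hgt
      push_neg at hgt
      have hle : #(↥(N ∩ A)) ≤ Cardinal.lift.{1} (Cardinal.aleph.{0} 1) := by
        rw [← (hmS.1 A hA).2]
        exact mk_le_mk_of_subset (Set.inter_subset_right)
      have hge : Cardinal.lift.{1} (Cardinal.aleph.{0} 1) ≤ #(↥(N ∩ A)) := by
        rw [← Cardinal.succ_aleph0, Cardinal.lift_succ]
        exact Order.succ_le_of_lt hgt
      exact hno A hA (le_antisymm hle hge)
    have hNm : N ∉ m := by
      intro hN
      have := hsmall N hN
      rw [Set.inter_self, hNcard] at this
      exact absurd (Cardinal.lift_le.mp this) (not_le.mpr aleph0_lt_aleph_one)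
    have hins : insert N m ∈ S := by
      constructor
      · rintro A (rfl | hA)
        · exact ⟨hNI, hNcard⟩
        · exact hmS.1 A hA
      · rintro A (rfl | hA) B (rfl | hB) hAB
        · exact absurd rfl hAB
        · exact hsmall B hB
        · rw [Set.inter_comm]
          exact hsmall A hA
        · exact hmS.2 A hA B hB hAB
    have := hmax hins (Set.subset_insert N m)
    exact hNm (this (Set.mem_insert N m))
  · -- cardinality
    rw [Cardinal.lift_two_power]
    apply le_antisymm
    · have hsub : m ⊆ 𝒫 I := fun A hA => (hmS.1 A hA).1
      calc #m ≤ #(↥(𝒫 I)) := mk_le_mk_of_subset hsub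
        _ = 2 ^ #(↥I) := mk_powerset I
        _ = 2 ^ Cardinal.lift.{1} (Cardinal.aleph.{0} 1) := by rw [mk_I]
    · have hinj : Function.Injective (fun f : ↥I → Bool =>
          (⟨Bf e f, hm0 (Set.mem_range_self f)⟩ : ↥m)) := by
        intro f g hfg
        exact Bf_injective e (congrArg Subtype.val hfg)
      have := mk_le_of_injective hinj
      calc (2 : Cardinal) ^ Cardinal.lift.{1} (Cardinal.aleph.{0} 1)
          = 2 ^ #(↥I) := by rw [mk_I]
        _ = #(Set ↥I) := (mk_set).symm
        _ = #(↥I → Bool) := mk_congr ((Equiv.refl _).arrowCongr Equiv.propEquivBool)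
        _ ≤ #(↥m) := this
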